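/- Assume f is a positive continuous function on (0,∞) with f ∈ RV_γ for some γ > 0, and let τ > 0 be a given constant. Then there exist a positive, continuous, increasing function g on (0,∞) with g ∈ RV_γ and a constant σ > 0 such that σ·g(u) ≤ f(u) ≤ g(u) for all u ≥ τ. -/

import Mathlib

open Filter MeasureTheory Set Topology

noncomputable section

open intervalIntegral

/-- `f` is regularly varying at infinity of index `ρ`. -/
def IsRV (f : ℝ → ℝ) (ρ : ℝ) : Prop :=
  ∀ ξ : ℝ, 0 < ξ → Tendsto (fun u => f (ξ * u) / f u) atTop (𝓝 (ξ ^ ρ))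



lemma rv_step_bound {k : ℝ → ℝ} (hkc : Continuous k) {γ : ℝ}
    (hk : ∀ t : ℝ, Tendsto (fun x => k (x + t) - k x) atTop (𝓝 (γ * t))) :
    ∃ C N : ℝ, ∀ x ≥ N, ∀ s ∈ Icc (0:ℝ) 1, |k (x + s) - k x - γ * s| ≤ C := by
  set E : ℕ → Set (Icc (0:ℝ) 1) :=
    fun n => {t | ∀ x : ℝ, (n:ℝ) ≤ x → |k (x + ↑t) - k x - γ * ↑t| ≤ 1} with hE
  have hcl : ∀ n, IsClosed (E n) := by
    intro n
    have : E n = ⋂ (x : ℝ) (_ : (n:ℝ) ≤ x),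
        {t : Icc (0:ℝ) 1 | |k (x + ↑t) - k x - γ * ↑t| ≤ 1} := by
      ext t; simp [hE, mem_iInter]
    rw [this]
    refine isClosed_iInter fun x => isClosed_iInter fun _ => ?_
    have hc : Continuous fun t : Icc (0:ℝ) 1 => |k (x + ↑t) - k x - γ * ↑t| :=
      (((hkc.comp (continuous_const.add continuous_subtype_val)).sub
        continuous_const).sub (continuous_const.mul continuous_subtype_val)).abs
    exact isClosed_le hc continuous_const
  have hcov : ⋃ n, E n = univ := by
    refine eq_univ_of_forall fun t => mem_iUnion.2 ?_
    have h0 : Tendsto (fun x => |k (x + ↑t) - k x - γ * ↑t|) atTop (𝓝 0) := by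
      have := (hk ↑t).sub (tendsto_const_nhds (x := γ * (t:ℝ)))
      simpa using this.abs
    have := (h0.eventually (eventually_le_nhds (by norm_num : (0:ℝ) < 1)))
    rw [eventually_atTop] at this
    obtain ⟨a, ha⟩ := this
    exact ⟨⌈a⌉₊, fun x hx => ha x (le_trans (Nat.le_ceil a) hx)⟩
  obtain ⟨n, t₀, ht₀⟩ := nonempty_interior_of_iUnion_of_closed hcl hcov
  rw [mem_interior_iff_mem_nhds, Metric.mem_nhds_iff] at ht₀
  obtain ⟨r, hr, hball⟩ := ht₀
  -- produce a nondegenerate interval [a,b] ⊆ [0,1] inside the ball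
  have key : ∃ a b : ℝ, a < b ∧ 0 ≤ a ∧ b ≤ 1 ∧
      ∀ s ∈ Icc a b, ∀ x : ℝ, (n:ℝ) ≤ x → |k (x + s) - k x - γ * s| ≤ 1 := by
    obtain ⟨ht01, ht02⟩ := t₀.2
    have hmem : ∀ s : ℝ, 0 ≤ s → s ≤ 1 → |s - ↑t₀| < r →
        ∀ x : ℝ, (n:ℝ) ≤ x → |k (x + s) - k x - γ * s| ≤ 1 := by
      intro s hs0 hs1 hsr x hx
      have : (⟨s, hs0, hs1⟩ : Icc (0:ℝ) 1) ∈ Metric.ball t₀ r := by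
        simp only [Metric.mem_ball, Subtype.dist_eq, Real.dist_eq]; exact hsr
      exact hball this x hx
    rcases le_or_gt (↑t₀ : ℝ) (1/2) with h | h
    · refine ⟨↑t₀, min 1 (↑t₀ + r/2), lt_min (by linarith) (by linarith), ht01, min_le_left _ _,
        fun s hs x hx => ?_⟩
      have h1 : s ≤ ↑t₀ + r/2 := le_trans hs.2 (min_le_right _ _)
      exact hmem s (le_trans ht01 hs.1) (le_trans hs.2 (min_le_left _ _))
        (abs_lt.2 ⟨by linarith [hs.1], by linarith⟩) x hx
    · refine ⟨max 0 (↑t₀ - r/2), ↑t₀, max_lt (by linarith) (by linarith), le_max_left _ _,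
        ht02, fun s hs x hx => ?_⟩
      have h1 : ↑t₀ - r/2 ≤ s := le_trans (le_max_right _ _) hs.1
      exact hmem s (le_trans (le_max_left _ _) hs.1) (le_trans hs.2 ht02)
        (abs_lt.2 ⟨by linarith, by linarith [hs.2]⟩) x hx
  obtain ⟨a, b, hab, ha0, hb1, hI⟩ := key
  set δ := b - a with hδdef
  have hδ : 0 < δ := by simp [hδdef]; linarith
  have h2 : ∀ x : ℝ, (n:ℝ) + 1 ≤ x → ∀ s, 0 ≤ s → s ≤ δ →
      |k (x + s) - k x - γ * s| ≤ 2 := by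
    intro x hx s hs0 hsδ
    have hw : (n:ℝ) ≤ x - a := by linarith
    have e1 := hI (a + s) ⟨le_add_of_nonneg_right hs0, by simp [hδdef] at hsδ; linarith⟩
      (x - a) hw
    have e2 := hI a ⟨le_refl a, le_of_lt hab⟩ (x - a) hw
    have key2 : k (x + s) - k x - γ * s =
        (k (x - a + (a + s)) - k (x - a) - γ * (a + s)) -
        (k (x - a + a) - k (x - a) - γ * a) := by
      rw [show x - a + (a + s) = x + s by ring, show x - a + a = x by ring]; ring
    rw [key2]
    calc |_ - _| ≤ |k (x - a + (a + s)) - k (x - a) - γ * (a + s)| +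
          |k (x - a + a) - k (x - a) - γ * a| := abs_sub _ _
      _ ≤ 2 := by linarith
  have hchain : ∀ j : ℕ, ∀ x : ℝ, (n:ℝ) + 1 ≤ x → ∀ s, 0 ≤ s → s ≤ (j:ℝ) * δ →
      |k (x + s) - k x - γ * s| ≤ 2 * j + 2 := by
    intro j
    induction j with
    | zero => intro x hx s hs0 hsj
              have : s = 0 := le_antisymm (by simpa using hsj) hs0
              subst this; simp [h2 x hx 0 le_rfl (le_of_lt hδ)]
    | succ j ih =>
      intro x hx s hs0 hsj
      rcases le_or_gt s δ with h | h
      · have := h2 x hx s hs0 h; push_cast; linarith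
      · have hsplit : k (x + s) - k x - γ * s =
            (k ((x + δ) + (s - δ)) - k (x + δ) - γ * (s - δ)) +
            (k (x + δ) - k x - γ * δ) := by
          rw [show x + δ + (s - δ) = x + s by ring]; ring
        have e1 := ih (x + δ) (by linarith) (s - δ) (by linarith)
          (by push_cast at hsj ⊢; linarith)
        have e2 := h2 x hx δ (le_of_lt hδ) le_rfl
        rw [hsplit]
        calc |_ + _| ≤ |k ((x + δ) + (s - δ)) - k (x + δ) - γ * (s - δ)| +
              |k (x + δ) - k x - γ * δ| := abs_add_le _ _
          _ ≤ 2 * ↑(j+1) + 2 := by push_cast; push_cast at e1; linarith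
  refine ⟨2 * ⌈1/δ⌉₊ + 2, (n:ℝ) + 1, fun x hx s hs => ?_⟩
  refine hchain ⌈1/δ⌉₊ x hx s hs.1 (le_trans hs.2 ?_)
  rw [← div_le_iff₀ hδ]  -- 1/δ ≤ j₀ … need 1 ≤ j₀ * δ
  exact Nat.le_ceil _


lemma rv_uct {k : ℝ → ℝ} (hkc : Continuous k) {γ : ℝ}
    (hk : ∀ t : ℝ, Tendsto (fun x => k (x + t) - k x) atTop (𝓝 (γ * t)))
    (hbd : ∃ C N : ℝ, ∀ x ≥ N, ∀ s ∈ Icc (0:ℝ) 1, |k (x + s) - k x - γ * s| ≤ C) :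
    ∀ ε > 0, ∃ N : ℝ, ∀ x ≥ N, ∀ s ∈ Icc (0:ℝ) 1, |k (x + s) - k x - γ * s| ≤ ε := by
  obtain ⟨C, N₁, hC⟩ := hbd
  set q : ℝ → ℝ := fun x => k x - ∫ t in (x-1)..x, k t with hq
  have hint : ∀ u v : ℝ, IntervalIntegrable k MeasureTheory.volume u v :=
    fun u v => hkc.intervalIntegrable u v
  have hkshift : Continuous fun t : ℝ => k (t - 1) :=
    hkc.comp (continuous_id.sub continuous_const)
  have hqeq : ∀ x : ℝ, q x = ∫ s in (0:ℝ)..1, (k x - k (x - s)) := by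
    intro x
    have hc1 : Continuous fun s : ℝ => k (x - s) :=
      hkc.comp (continuous_const.sub continuous_id)
    have h1 : (∫ s in (0:ℝ)..1, k (x - s)) = ∫ t in (x-1)..x, k t := by
      simpa using integral_comp_sub_left (a := (0:ℝ)) (b := 1) (fun t => k t) x
    have h2 : (∫ s in (0:ℝ)..1, (k x - k (x - s)))
        = (∫ _ in (0:ℝ)..1, k x) - ∫ s in (0:ℝ)..1, k (x - s) :=
      integral_sub intervalIntegrable_const (hc1.intervalIntegrable _ _)
    rw [h2, h1, intervalIntegral.integral_const]
    simp [hq]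
  have hqlim : Tendsto q atTop (𝓝 (γ / 2)) := by
    have hlim2 : (∫ s in (0:ℝ)..1, γ * s) = γ / 2 := by
      rw [intervalIntegral.integral_const_mul, integral_id]; ring
    rw [show (𝓝 (γ/2)) = 𝓝 (∫ s in (0:ℝ)..1, γ * s) by rw [hlim2]]
    have key := intervalIntegral.tendsto_integral_filter_of_dominated_convergence
      (μ := MeasureTheory.volume) (a := (0:ℝ)) (b := 1) (l := atTop)
      (F := fun x s => k x - k (x - s)) (f := fun s => γ * s)
      (bound := fun _ => C + |γ|)
      ?_ ?_ ?_ ?_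
    · refine Tendsto.congr' ?_ key
      filter_upwards [eventually_ge_atTop (0:ℝ)] with x _
      exact (hqeq x).symm
    · refine Eventually.of_forall fun x => ?_
      have hc1 : Continuous fun s : ℝ => k x - k (x - s) :=
        continuous_const.sub (hkc.comp (continuous_const.sub continuous_id))
      exact hc1.aestronglyMeasurable.restrict
    · filter_upwards [eventually_ge_atTop (N₁ + 1)] with x hx
      refine MeasureTheory.ae_of_all _ fun s hs => ?_
      rw [uIoc_of_le (by norm_num : (0:ℝ) ≤ 1)] at hs
      have hs1 : 0 ≤ s := le_of_lt hs.1
      have key := hC (x - s) (by linarith [hs.2]) s ⟨hs1, hs.2⟩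
      rw [show x - s + s = x by ring] at key
      have h4 : |k x - k (x - s)| ≤ C + |γ * s| := by
        calc |k x - k (x - s)| = |(k x - k (x - s) - γ * s) + γ * s| := by ring_nf
          _ ≤ |k x - k (x - s) - γ * s| + |γ * s| := abs_add_le _ _
          _ ≤ C + |γ * s| := by linarith
      have h5 : |γ * s| ≤ |γ| := by
        rw [abs_mul, abs_of_nonneg hs1]
        exact mul_le_of_le_one_right (abs_nonneg γ) hs.2
      simpa [Real.norm_eq_abs] using le_trans h4 (by linarith)
    · exact intervalIntegrable_const
    · refine MeasureTheory.ae_of_all _ fun s _ => ?_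
      have h1 : Tendsto (fun x : ℝ => x - s) atTop atTop :=
        (tendsto_atTop_add_const_right atTop (-s) tendsto_id).congr
          (fun x => by simp [sub_eq_add_neg])
      refine ((hk s).comp h1).congr fun x => ?_
      simp only [Function.comp]
      rw [show x - s + s = x by ring]
  -- main part
  intro ε hε
  have hd : ∀ᶠ y in atTop, |k (y + 1) - k y - γ| ≤ ε / 4 := by
    have h0 : Tendsto (fun y => |k (y + 1) - k y - γ|) atTop (𝓝 0) := by
      have := (hk 1).sub (tendsto_const_nhds (x := γ * 1))
      simpa using this.abs
    exact h0.eventually (eventually_le_nhds (by linarith))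
  have hq4 : ∀ᶠ y in atTop, |q y - γ / 2| ≤ ε / 4 := by
    have h0 : Tendsto (fun y => |q y - γ / 2|) atTop (𝓝 0) := by
      have := hqlim.sub (tendsto_const_nhds (x := γ / 2)); simpa using this.abs
    exact h0.eventually (eventually_le_nhds (by linarith))
  rw [eventually_atTop] at hd hq4
  obtain ⟨N₂, hN₂⟩ := hd
  obtain ⟨N₃, hN₃⟩ := hq4
  refine ⟨max N₃ (N₂ + 1), fun x hx s hs => ?_⟩
  have hxN₃ : N₃ ≤ x := le_trans (le_max_left _ _) hx
  have hxN₂ : N₂ + 1 ≤ x := le_trans (le_max_right _ _) hx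
  have hK : (∫ t in (x+s-1)..(x+s), k t) - ∫ t in (x-1)..x, k t
      = ∫ t in x..(x+s), (k t - k (t-1)) := by
    have A := integral_add_adjacent_intervals (hint (x-1) (x+s-1)) (hint (x+s-1) (x+s))
    have B := integral_add_adjacent_intervals (hint (x-1) x) (hint x (x+s))
    have h1 : (∫ t in x..(x+s), k (t-1)) = ∫ t in (x-1)..(x+s-1), k t := by
      simpa using integral_comp_sub_right (a := x) (b := x+s) (fun t => k t) 1
    have hsub : (∫ t in x..(x+s), (k t - k (t-1)))
        = (∫ t in x..(x+s), k t) - ∫ t in x..(x+s), k (t-1) :=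
      integral_sub (hint _ _) (hkshift.intervalIntegrable _ _)
    rw [hsub, h1]
    linarith
  have hIbd : |(∫ t in x..(x+s), (k t - k (t-1))) - γ * s| ≤ ε / 4 * s := by
    have hsub2 : (∫ t in x..(x+s), (k t - k (t-1) - γ))
        = (∫ t in x..(x+s), (k t - k (t-1))) - ∫ t in x..(x+s), (γ:ℝ) :=
      integral_sub ((hkc.sub hkshift).intervalIntegrable _ _) intervalIntegrable_const
    have h2 : (∫ t in x..(x+s), (k t - k (t-1))) - γ * s
        = ∫ t in x..(x+s), (k t - k (t-1) - γ) := by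
      rw [hsub2, intervalIntegral.integral_const]
      simp; ring
    rw [h2]
    have h3 := norm_integral_le_of_norm_le_const (a := x) (b := x + s) (C := ε / 4)
      (f := fun t => k t - k (t-1) - γ) ?_
    · rw [Real.norm_eq_abs] at h3
      refine le_trans h3 ?_
      rw [show x + s - x = s by ring, abs_of_nonneg hs.1]
    · intro t ht
      rw [uIoc_of_le (by linarith [hs.1])] at ht
      have h6 : N₂ ≤ t - 1 := by linarith [ht.1]
      have h7 := hN₂ (t - 1) h6
      rw [show t - 1 + 1 = t by ring] at h7
      simpa [Real.norm_eq_abs] using h7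
  have e1 := hN₃ (x + s) (by linarith [hs.1])
  have e2 := hN₃ x hxN₃
  have hiden : k (x + s) - k x - γ * s
      = (q (x + s) - γ/2) - (q x - γ/2) + ((∫ t in x..(x+s), (k t - k (t-1))) - γ * s) := by
    have hqx : q (x+s) = k (x+s) - ∫ t in (x+s-1)..(x+s), k t := rfl
    have hqx2 : q x = k x - ∫ t in (x-1)..x, k t := rfl
    rw [hqx, hqx2]
    linarith [hK]
  rw [hiden]
  have hs1 : ε / 4 * s ≤ ε / 4 := by nlinarith [hs.1, hs.2]
  calc |_| ≤ |(q (x + s) - γ/2) - (q x - γ/2)|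
        + |(∫ t in x..(x+s), (k t - k (t-1))) - γ * s| := abs_add_le _ _
    _ ≤ (|q (x + s) - γ/2| + |q x - γ/2|) + (ε/4 * s) := by
        gcongr; exact abs_sub _ _
    _ ≤ ε := by linarith


lemma rv_sup {k : ℝ → ℝ} (hkc : Continuous k) {γ : ℝ} (hγ : 0 < γ) (c : ℝ)
    (huct : ∀ ε > 0, ∃ N : ℝ, ∀ x ≥ N, ∀ s ∈ Icc (0:ℝ) 1, |k (x + s) - k x - γ * s| ≤ ε) :
    ∃ G : ℝ → ℝ, Continuous G ∧ Monotone G ∧ (∀ x, c ≤ x → k x ≤ G x) ∧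
      Tendsto (fun x => G x - k x) atTop (𝓝 0) := by
  set G : ℝ → ℝ := fun x => sSup (k '' Icc c (max x c)) with hG
  have hne : ∀ x : ℝ, (k '' Icc c (max x c)).Nonempty :=
    fun x => ⟨k c, mem_image_of_mem k ⟨le_rfl, le_max_right _ _⟩⟩
  have hbdd : ∀ x : ℝ, BddAbove (k '' Icc c (max x c)) :=
    fun x => (isCompact_Icc.image hkc).bddAbove
  have hmono : Monotone G := by
    intro x y hxy
    exact csSup_le_csSup (hbdd y) (hne x)
      (image_mono (Icc_subset_Icc_right (max_le_max hxy le_rfl)))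
  have hle : ∀ x, c ≤ x → k x ≤ G x := by
    intro x hcx
    exact le_csSup (hbdd x) (mem_image_of_mem k ⟨hcx, le_max_left _ _⟩)
  have hcont : Continuous G := by
    rw [Metric.continuous_iff]
    intro x₀ ε hε
    set b₀ := max x₀ c + 2 with hb₀
    have huc := isCompact_Icc.uniformContinuousOn_of_continuous
      (s := Icc c b₀) hkc.continuousOn
    rw [Metric.uniformContinuousOn_iff] at huc
    obtain ⟨δ₀, hδ₀, hδ⟩ := huc (ε/3) (by linarith)
    set δ1 := min (δ₀/2) 1 with hδ1
    have hδ1pos : 0 < δ1 := lt_min (by linarith) one_pos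
    have hδ11 : δ1 ≤ 1 := min_le_right _ _
    have key : ∀ x : ℝ, x ≤ x₀ + 1 → G (x + δ1) ≤ G x + ε/3 := by
      intro x hxx
      refine csSup_le (hne _) ?_
      rintro v ⟨t, ht, rfl⟩
      set a := max x c with ha
      rcases le_total t a with h | h
      · have : k t ≤ G x := le_csSup (hbdd x) ⟨t, ⟨ht.1, h⟩, rfl⟩
        linarith
      · have ht2 : t ≤ a + δ1 := by
          refine le_trans ht.2 (max_le ?_ ?_)
          · exact add_le_add_left (le_max_left x c) δ1
          · exact le_trans (le_max_right x c) (by linarith)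
        have hab2 : a ≤ max x₀ c + 1 := by
          rw [ha]
          refine max_le ?_ ?_
          · have := le_max_left x₀ c; linarith
          · have := le_max_right x₀ c; linarith
        have hab : a ≤ b₀ := by rw [hb₀]; linarith
        have hta : t ∈ Icc c b₀ := ⟨ht.1, by rw [hb₀]; linarith⟩
        have haa : a ∈ Icc c b₀ := ⟨le_max_right _ _, by linarith [hδ1pos]⟩
        have hdist : dist t a < δ₀ := by
          rw [Real.dist_eq, abs_of_nonneg (by linarith)]
          have : δ₀/2 < δ₀ := by linarith
          calc t - a ≤ δ1 := by linarith
            _ ≤ δ₀/2 := min_le_left _ _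
            _ < δ₀ := this
        have hkt : k t ≤ k a + ε/3 := by
          have := hδ t hta a haa hdist
          rw [Real.dist_eq] at this
          have := abs_lt.1 this
          linarith [this.1, this.2]
        have hka : k a ≤ G x := le_csSup (hbdd x) ⟨a, ⟨le_max_right _ _, le_rfl⟩, rfl⟩
        linarith
    refine ⟨δ1, hδ1pos, fun x hx => ?_⟩
    rw [Real.dist_eq] at hx
    have hx' := abs_lt.1 hx
    have hup : G x ≤ G x₀ + ε/3 := by
      have h1 : G x ≤ G (x₀ + δ1) := hmono (by linarith [hx'.2])
      have h2 := key x₀ (by linarith)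
      linarith
    have hlo : G x₀ - ε/3 ≤ G x := by
      have h1 : G (x₀ - δ1) ≤ G x := hmono (by linarith [hx'.1])
      have h2 := key (x₀ - δ1) (by linarith [hδ1pos])
      rw [show x₀ - δ1 + δ1 = x₀ by ring] at h2
      linarith
    rw [Real.dist_eq, abs_lt]
    constructor <;> linarith
  -- tendsto part
  have htend : Tendsto (fun x => G x - k x) atTop (𝓝 0) := by
    rw [Metric.tendsto_atTop]
    intro ε hε
    set ε' := min (ε/2) (γ/2) with hε'def
    have hε'pos : 0 < ε' := lt_min (by linarith) (by linarith)
    have hε'γ : ε' ≤ γ/2 := min_le_right _ _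
    obtain ⟨N, hN⟩ := huct ε' hε'pos
    set N' := max N c with hN'
    have hN'N : N ≤ N' := le_max_left _ _
    have hN'c : c ≤ N' := le_max_right _ _
    -- claim A
    have claimA : ∀ m : ℕ, ∀ x y : ℝ, N' ≤ y → y ≤ x → x - y ≤ (m:ℝ) → k y ≤ k x + ε' := by
      intro m
      induction m with
      | zero =>
        intro x y h1 h2 h3
        have : x = y := by push_cast at h3; linarith
        subst this; linarith
      | succ m ih =>
        intro x y h1 h2 h3
        rcases le_or_gt (x - y) 1 with h | h
        · have := hN y (le_trans hN'N h1) (x - y) ⟨by linarith, h⟩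
          rw [show y + (x - y) = x by ring] at this
          have h4 := (abs_le.1 this).1
          nlinarith [hγ.le]
        · have hstep := hN y (le_trans hN'N h1) 1 ⟨zero_le_one, le_rfl⟩
          have h4 := (abs_le.1 hstep).1
          have h5 : k y ≤ k (y + 1) := by nlinarith
          have h6 := ih x (y + 1) (by linarith) (by linarith) (by push_cast at h3 ⊢; linarith)
          linarith
    -- claim B : k tends to infinity
    have stepB : ∀ j : ℕ, k N' + (γ/2) * j ≤ k (N' + j) := by
      intro j
      induction j with
      | zero => simp
      | succ j ih =>
        have hstep := hN (N' + j) (by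
          have : (0:ℝ) ≤ j := Nat.cast_nonneg j
          linarith) 1 ⟨zero_le_one, le_rfl⟩
        have h4 := (abs_le.1 hstep).1
        push_cast
        have : N' + (j:ℝ) + 1 = N' + ((j:ℝ) + 1) := by ring
        rw [← this]
        nlinarith
    have claimB : Tendsto k atTop atTop := by
      have hlow : ∀ x : ℝ, N' ≤ x → k N' + (γ/2) * (x - N' - 1) - ε' ≤ k x := by
        intro x hx
        set m := ⌊x - N'⌋₊ with hm
        have hm1 : (m:ℝ) ≤ x - N' := Nat.floor_le (by linarith)
        have hm2 : x - N' - 1 < m := Nat.sub_one_lt_floor _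
        have hs : x - (N' + m) ∈ Icc (0:ℝ) 1 := ⟨by linarith, by linarith⟩
        have := hN (N' + (m:ℝ)) (le_trans hN'N (le_add_of_nonneg_right (Nat.cast_nonneg m)))
          (x - (N' + (m:ℝ))) hs
        rw [show N' + ↑m + (x - (N' + ↑m)) = x by ring] at this
        have h4 := (abs_le.1 this).1
        have h5 := stepB m
        nlinarith [hs.1, hγ.le]
      have haff : Tendsto (fun x : ℝ => k N' + (γ/2) * (x - N' - 1) - ε') atTop atTop := by
        apply tendsto_atTop_add_const_right
        apply tendsto_atTop_add_const_left
        refine Tendsto.const_mul_atTop (by linarith) ?_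
        exact (tendsto_atTop_add_const_right atTop (-N'-1) tendsto_id).congr
          (fun x => by simp only [id_eq]; ring)
      exact tendsto_atTop_mono' atTop (eventually_atTop.2 ⟨N', hlow⟩) haff
    -- finish
    set M₀ := sSup (k '' Icc c N') with hM₀
    have hM₀bdd : BddAbove (k '' Icc c N') := (isCompact_Icc.image hkc).bddAbove
    obtain ⟨X₀, hX₀⟩ := eventually_atTop.1 (claimB.eventually_ge_atTop M₀)
    refine ⟨max (max N' X₀) (N' + 1), fun x hx => ?_⟩
    have hx1 : N' ≤ x := le_trans (le_trans (le_max_left _ _) (le_max_left _ _)) hx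
    have hx2 : X₀ ≤ x := le_trans (le_trans (le_max_right _ _) (le_max_left _ _)) hx
    have hxc : c ≤ x := le_trans hN'c hx1
    have hGx : G x ≤ k x + ε' := by
      refine csSup_le (hne x) ?_
      rintro v ⟨t, ht, rfl⟩
      rw [max_eq_left hxc] at ht
      rcases le_total t N' with h | h
      · have h1 : k t ≤ M₀ := le_csSup hM₀bdd ⟨t, ⟨ht.1, h⟩, rfl⟩
        have h2 := hX₀ x hx2
        linarith
      · exact claimA ⌈x - t⌉₊ x t h ht.2 (Nat.le_ceil _)
    have hkG := hle x hxc
    rw [Real.dist_eq, sub_zero, abs_of_nonneg (by linarith)]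
    have : ε' ≤ ε/2 := min_le_left _ _
    linarith
  exact ⟨G, hcont, hmono, hle, htend⟩

/-- If `f` is a positive continuous function on `(0,∞)` with `f ∈ RV_γ`, `γ > 0`,
then for any `τ > 0` there exist a positive, continuous, increasing function
`g ∈ RV_γ` on `(0,∞)` and a constant `σ > 0` with `σ g(u) ≤ f(u) ≤ g(u)` for `u ≥ τ`. -/
theorem bounded_by_increasing_RV (γ : ℝ) (hγ : 0 < γ)
    (f : ℝ → ℝ) (hfc : ContinuousOn f (Ioi (0:ℝ)))
    (hfpos : ∀ u : ℝ, 0 < u → 0 < f u)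
    (hRV : IsRV f γ) (τ : ℝ) (hτ : 0 < τ) :
    ∃ g : ℝ → ℝ, ∃ σ : ℝ, 0 < σ ∧
      ContinuousOn g (Ioi (0:ℝ)) ∧ (∀ u : ℝ, 0 < u → 0 < g u) ∧
      StrictMonoOn g (Ioi (0:ℝ)) ∧ IsRV g γ ∧
      ∀ u : ℝ, τ ≤ u → σ * g u ≤ f u ∧ f u ≤ g u := by
  classical
  set k : ℝ → ℝ := fun x => Real.log (f (Real.exp x)) with hkdef
  have hfe : Continuous fun x => f (Real.exp x) :=
    hfc.comp_continuous Real.continuous_exp (fun x => Real.exp_pos x)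
  have hkc : Continuous k := by
    rw [continuous_iff_continuousAt]
    intro x
    have : ContinuousAt (Real.log ∘ fun x => f (Real.exp x)) x :=
      ContinuousAt.comp (Real.continuousAt_log (ne_of_gt (hfpos _ (Real.exp_pos x))))
        hfe.continuousAt
    exact this
  have hfk : ∀ u : ℝ, 0 < u → f u = Real.exp (k (Real.log u)) := by
    intro u hu
    rw [hkdef]
    simp only [Real.exp_log hu]
    rw [Real.exp_log (hfpos u hu)]
  have hk : ∀ t : ℝ, Tendsto (fun x => k (x + t) - k x) atTop (𝓝 (γ * t)) := by
    intro t
    have h2 := (hRV (Real.exp t) (Real.exp_pos t)).comp Real.tendsto_exp_atTop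
    have hpos : (0:ℝ) < Real.exp t ^ γ := Real.rpow_pos_of_pos (Real.exp_pos t) γ
    have h3 := ((Real.continuousAt_log (ne_of_gt hpos)).tendsto).comp h2
    have h4 : Real.log (Real.exp t ^ γ) = γ * t := by
      rw [Real.log_rpow (Real.exp_pos t), Real.log_exp]
    rw [h4] at h3
    refine h3.congr fun x => ?_
    simp only [Function.comp]
    rw [Real.log_div (ne_of_gt (hfpos _ (by positivity))) (ne_of_gt (hfpos _ (Real.exp_pos x)))]
    rw [hkdef]
    congr 2
    rw [Real.exp_add, mul_comm]
  obtain ⟨G, hGc, hGm, hGle, hGtend⟩ := rv_sup hkc hγ (Real.log τ)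
    (rv_uct hkc hk (rv_step_bound hkc hk))
  set c := Real.log τ with hcdef
  set g₀ : ℝ → ℝ := fun u => Real.exp (G (Real.log u)) with hg₀def
  set mm : ℝ → ℝ := fun u => 2 - τ / (τ + u) with hmmdef
  -- basic facts about mm
  have hmm1 : ∀ u : ℝ, 0 < u → 1 < mm u := by
    intro u hu
    have h1 : τ / (τ + u) < 1 := (div_lt_one (by linarith)).2 (by linarith)
    simp only [hmmdef]; linarith
  have hmm2 : ∀ u : ℝ, 0 < u → mm u ≤ 2 := by
    intro u hu
    have h1 : 0 ≤ τ / (τ + u) := by positivity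
    simp only [hmmdef]; linarith
  -- bound B on G - k beyond c
  obtain ⟨X₁, hX₁⟩ := eventually_atTop.1 (hGtend.eventually (eventually_le_nhds one_pos))
  set X₁' := max X₁ c with hX₁'
  have hDbdd : BddAbove ((fun x => G x - k x) '' Icc c X₁') :=
    (isCompact_Icc.image (hGc.sub hkc)).bddAbove
  set D := sSup ((fun x => G x - k x) '' Icc c X₁') with hDdef
  set B := max D 1 with hBdef
  have hB : ∀ x : ℝ, c ≤ x → G x - k x ≤ B := by
    intro x hx
    rcases le_total x X₁' with h | h
    · exact le_trans (le_csSup hDbdd (mem_image_of_mem _ ⟨hx, h⟩)) (le_max_left _ _)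
    · exact le_trans (hX₁ x (le_trans (le_max_left _ _) h)) (le_max_right _ _)
  set σ : ℝ := 1 / (2 * Real.exp B) with hσdef
  have hσpos : 0 < σ := by rw [hσdef]; positivity
  refine ⟨fun u => g₀ u * mm u, σ, hσpos, ?_, ?_, ?_, ?_, ?_⟩
  · -- continuity
    have hlog : ContinuousOn Real.log (Ioi (0:ℝ)) :=
      Real.continuousOn_log.mono (fun x hx => ne_of_gt (mem_Ioi.1 hx))
    have hgc : ContinuousOn g₀ (Ioi (0:ℝ)) :=
      Real.continuous_exp.comp_continuousOn (hGc.comp_continuousOn hlog)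
    have hmc : ContinuousOn mm (Ioi (0:ℝ)) := by
      refine continuousOn_const.sub (continuousOn_const.div
        ((continuous_const.add continuous_id).continuousOn) ?_)
      intro u hu
      have := mem_Ioi.1 hu; positivity
    exact hgc.mul hmc
  · -- positivity
    intro u hu
    have := hmm1 u hu
    have : (0:ℝ) < mm u := by linarith
    positivity
  · -- strict mono
    intro u hu v hv huv
    have hmuv : mm u < mm v := by
      have h1 : τ / (τ + v) < τ / (τ + u) :=
        div_lt_div_of_pos_left hτ (by have := mem_Ioi.1 hu; linarith) (by linarith)
      simp only [hmmdef]; linarith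
    have hg₀uv : g₀ u ≤ g₀ v :=
      Real.exp_le_exp.2 (hGm (Real.log_le_log (mem_Ioi.1 hu) huv.le))
    have h2 : g₀ u * mm u < g₀ u * mm v :=
      mul_lt_mul_of_pos_left hmuv (Real.exp_pos _)
    have h3 : g₀ u * mm v ≤ g₀ v * mm v := by
      have hmv : (0:ℝ) ≤ mm v := by have := hmm1 v (mem_Ioi.1 hv); linarith
      exact mul_le_mul_of_nonneg_right hg₀uv hmv
    show g₀ u * mm u < g₀ v * mm v
    linarith
  · -- IsRV
    intro ξ hξ
    have hGrv : Tendsto (fun x => G (x + Real.log ξ) - G x) atTop (𝓝 (γ * Real.log ξ)) := by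
      set t := Real.log ξ
      have hshift : Tendsto (fun x : ℝ => x + t) atTop atTop :=
        tendsto_atTop_add_const_right atTop t tendsto_id
      have h1 : Tendsto (fun x => G (x + t) - k (x + t)) atTop (𝓝 0) := by
        refine (hGtend.comp hshift).congr fun x => ?_
        simp [Function.comp]
      have h2 := (h1.sub hGtend).add (hk t)
      rw [show (0:ℝ) - 0 + γ * t = γ * t by ring] at h2
      refine h2.congr fun x => by ring
    have hmain : Tendsto (fun u => g₀ (ξ*u) / g₀ u) atTop (𝓝 (ξ ^ γ)) := by
      have h2 : Tendsto (fun u => G (Real.log u + Real.log ξ) - G (Real.log u)) atTop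
          (𝓝 (γ * Real.log ξ)) := hGrv.comp Real.tendsto_log_atTop
      have h3 := (Real.continuous_exp.tendsto _).comp h2
      have h4 : Real.exp (γ * Real.log ξ) = ξ ^ γ := by
        rw [Real.rpow_def_of_pos hξ, mul_comm]
      rw [h4] at h3
      refine Tendsto.congr' ?_ h3
      filter_upwards [eventually_gt_atTop (0:ℝ)] with u hu
      simp only [Function.comp, hg₀def]
      rw [← Real.exp_sub]
      congr 2
      rw [Real.log_mul (ne_of_gt hξ) (ne_of_gt hu), add_comm]
    have hmlim : Tendsto mm atTop (𝓝 2) := by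
      have h1 : Tendsto (fun u : ℝ => τ / (τ + u)) atTop (𝓝 0) :=
        tendsto_const_nhds.div_atTop (tendsto_atTop_add_const_left atTop τ tendsto_id)
      have h2 := (tendsto_const_nhds : Tendsto (fun _ : ℝ => (2:ℝ)) atTop (𝓝 2)).sub h1
      rw [sub_zero] at h2
      exact h2
    have hm2 : Tendsto (fun u => mm (ξ*u) / mm u) atTop (𝓝 1) := by
      have hmlim2 : Tendsto (fun u => mm (ξ*u)) atTop (𝓝 2) :=
        hmlim.comp (Tendsto.const_mul_atTop hξ tendsto_id)
      have := hmlim2.div hmlim (by norm_num)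
      norm_num at this
      exact this
    have := hmain.mul hm2
    rw [mul_one] at this
    refine this.congr fun u => ?_
    rw [div_mul_div_comm]
  · -- bounds
    intro u hu
    have hu0 : 0 < u := lt_of_lt_of_le hτ hu
    have hcl : c ≤ Real.log u := Real.log_le_log hτ hu
    have hfu : f u = Real.exp (k (Real.log u)) := hfk u hu0
    have hkG := hGle (Real.log u) hcl
    have hupper : f u ≤ g₀ u * mm u := by
      have h1 : f u ≤ g₀ u := by
        rw [hfu]; exact Real.exp_le_exp.2 hkG
      have h2 : 1 ≤ mm u := (hmm1 u hu0).le
      calc f u ≤ g₀ u := h1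
        _ ≤ g₀ u * mm u := le_mul_of_one_le_right (Real.exp_pos _).le h2
    refine ⟨?_, hupper⟩
    have hg₀b : g₀ u ≤ Real.exp B * f u := by
      rw [hfu, ← Real.exp_add]
      exact Real.exp_le_exp.2 (by linarith [hB (Real.log u) hcl])
    have hgb : g₀ u * mm u ≤ Real.exp B * f u * 2 := by
      refine mul_le_mul hg₀b (hmm2 u hu0) ?_ (by have := hfpos u hu0; positivity)
      have := hmm1 u hu0; linarith
    have hσ1 : σ * (Real.exp B * f u * 2) = f u := by
      rw [hσdef]; field_simp
    calc σ * (g₀ u * mm u) ≤ σ * (Real.exp B * f u * 2) :=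
          mul_le_mul_of_nonneg_left hgb hσpos.le
      _ = f u := hσ1
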